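/- Let X be a Polish space and let (P_k) be a Feller Markov transition function with Markov semigroup 𝔓_k acting on bounded continuous functions and 𝔓_k* acting on probability measures. Suppose (i) for every bounded Lipschitz function f on X there is a constant L_f > 0 such that 𝔓_k f is L_f-Lipschitz for every k ≥ 0, and (ii) for every point z ∈ X and every open ball B ⊂ X there exists l ≥ 1 with P_l(z,B) > 0. Then 𝔓_k* has at most one stationary probability measure. -/

import Mathlib

open MeasureTheory Metric Filter
open scoped NNReal ENNReal

lemma prob_bind {X : Type*} [MeasurableSpace X] (m : Measure X) [IsProbabilityMeasure m]
    {k : X → Measure X} (hk : Measurable k) (hkp : ∀ z, IsProbabilityMeasure (k z)) :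
    IsProbabilityMeasure (m.bind k) := by
  constructor
  rw [Measure.bind_apply MeasurableSet.univ hk.aemeasurable]
  simp [measure_univ]

lemma integrable_of_bdd {X : Type*} [MeasurableSpace X] {m : Measure X} [IsFiniteMeasure m]
    {f : X → ℝ} (hf : AEStronglyMeasurable f m) {C : ℝ} (hC : ∀ x, |f x| ≤ C) :
    Integrable f m :=
  Integrable.mono' (integrable_const C) hf (Filter.Eventually.of_forall (by simpa [Real.norm_eq_abs] using hC))

lemma my_integral_bind {X : Type*} [MeasurableSpace X] (m : Measure X) [IsProbabilityMeasure m]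
    {k : X → Measure X} (hk : Measurable k) (hkp : ∀ z, IsProbabilityMeasure (k z))
    {f : X → ℝ} (hf : Measurable f) {C : ℝ} (hC : ∀ x, |f x| ≤ C) :
    ∫ x, f x ∂(m.bind k) = ∫ z, ∫ x, f x ∂(k z) ∂m := by
  have hbp : IsProbabilityMeasure (m.bind k) := prob_bind m hk hkp
  have hne : Nonempty X := Measure.nonempty_of_neZero m
  have hC0 : 0 ≤ C := le_trans (abs_nonneg _) (hC (Classical.arbitrary _))
  set g : X → ℝ := fun x => f x + C with hgdef
  have hg0 : ∀ x, 0 ≤ g x := fun x => by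
    have := abs_le.1 (hC x); simp only [hgdef]; linarith [this.1]
  have hgb : ∀ x, |g x| ≤ C + C := fun x => by
    have := abs_le.1 (hC x)
    simp only [hgdef, abs_le]; constructor <;> linarith [this.1, this.2]
  have hgm : Measurable g := hf.add_const C
  set G : X → ℝ≥0∞ := fun x => ENNReal.ofReal (g x) with hGdef
  have hGm : Measurable G := hgm.ennreal_ofReal
  have hGle : ∀ z : X, ∫⁻ x, G x ∂(k z) ≤ ENNReal.ofReal (C + C) := fun z => by
    have := hkp z
    calc ∫⁻ x, G x ∂(k z) ≤ ∫⁻ _, ENNReal.ofReal (C + C) ∂(k z) :=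
          lintegral_mono fun x => ENNReal.ofReal_le_ofReal (le_of_abs_le (hgb x))
      _ = ENNReal.ofReal (C + C) := by simp [measure_univ]
  have hinner : ∀ z : X, ∫ x, g x ∂(k z) = (∫⁻ x, G x ∂(k z)).toReal := fun z =>
    integral_eq_lintegral_of_nonneg_ae (Filter.Eventually.of_forall hg0) hgm.aestronglyMeasurable
  have hkey : ∫ x, g x ∂(m.bind k) = ∫ z, ∫ x, g x ∂(k z) ∂m := by
    rw [integral_eq_lintegral_of_nonneg_ae (Filter.Eventually.of_forall hg0) hgm.aestronglyMeasurable,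
      Measure.lintegral_bind hk.aemeasurable hGm.aemeasurable]
    have hmeaslin : Measurable fun z => ∫⁻ x, G x ∂(k z) :=
      (Measure.measurable_lintegral hGm).comp hk
    rw [← integral_toReal hmeaslin.aemeasurable
      (Filter.Eventually.of_forall fun z => lt_of_le_of_lt (hGle z) ENNReal.ofReal_lt_top)]
    exact (integral_congr_ae (Filter.Eventually.of_forall fun z => (hinner z).symm))
  have hfi : ∀ (ρ : Measure X), IsProbabilityMeasure ρ → ∫ x, f x ∂ρ = ∫ x, g x ∂ρ - C := by
    intro ρ hρ
    have h1 : Integrable g ρ := integrable_of_bdd hgm.aestronglyMeasurable hgb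
    have : ∫ x, f x ∂ρ = ∫ x, (g x - C) ∂ρ := by simp [hgdef]
    rw [this, integral_sub h1 (integrable_const C), integral_const]
    simp [measure_univ]
  rw [hfi _ hbp, hkey]
  have houter : Integrable (fun z => ∫ x, g x ∂(k z)) m := by
    refine integrable_of_bdd ?_ (C := C + C) ?_
    · refine (Measurable.aestronglyMeasurable ?_)
      have hmeaslin : Measurable fun z => ∫⁻ x, G x ∂(k z) :=
        (Measure.measurable_lintegral hGm).comp hk
      simpa [hinner] using hmeaslin.ennreal_toReal
    · intro z
      have := hkp z
      have := norm_integral_le_of_norm_le_const (μ := k z) (f := g) (C := C + C)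
        (Filter.Eventually.of_forall (by simpa [Real.norm_eq_abs] using hgb))
      simpa [Real.norm_eq_abs, measure_univ] using this
  have : ∫ z, ∫ x, f x ∂(k z) ∂m = ∫ z, (∫ x, g x ∂(k z) - C) ∂m := by
    refine integral_congr_ae (Filter.Eventually.of_forall fun z => ?_)
    exact hfi _ (hkp z)
  rw [this, integral_sub houter (integrable_const C), integral_const]
  simp [measure_univ]

lemma key_lemma {X : Type*} [MetricSpace X] [PolishSpace X] [MeasurableSpace X] [BorelSpace X]
    (P : ℕ → X → Measure X) (hprob : ∀ k z, IsProbabilityMeasure (P k z))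
    (hPm : ∀ k, Measurable (P k))
    (hbind : ∀ k l z, P (k + l) z = (P k z).bind (P l))
    (hFeller : ∀ f : X → ℝ, (∃ Cb : ℝ, ∀ z, |f z| ≤ Cb) → (∃ K : ℝ≥0, LipschitzWith K f) →
      ∃ L : ℝ≥0, 0 < L ∧ ∀ k : ℕ, LipschitzWith L fun z => ∫ y, f y ∂(P k z))
    (hirr : ∀ z : X, ∀ x : X, ∀ r : ℝ, 0 < r → ∃ l : ℕ, 1 ≤ l ∧ 0 < P l z (ball x r))
    (μ ν : Measure X) [IsProbabilityMeasure μ] [IsProbabilityMeasure ν]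
    (hμb : ∀ l : ℕ, μ.bind (P (l+1)) = μ) (hνb : ∀ l : ℕ, ν.bind (P (l+1)) = ν)
    (f : X → ℝ) (Cb : ℝ) (hCb : ∀ z, |f z| ≤ Cb) (K : ℝ≥0) (hK : LipschitzWith K f) :
    ∫ x, f x ∂μ = ∫ x, f x ∂ν := by
  have hne : Nonempty X := Measure.nonempty_of_neZero μ
  have hCb0 : 0 ≤ Cb := le_trans (abs_nonneg _) (hCb (Classical.arbitrary _))
  have hfm : Measurable f := hK.continuous.measurable
  obtain ⟨L, hL0, hLip⟩ := hFeller f ⟨Cb, hCb⟩ ⟨K, hK⟩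
  set Qf : ℕ → X → ℝ := fun k z => ∫ y, f y ∂(P k z) with hQf
  have hQlip : ∀ k, LipschitzWith L (Qf k) := hLip
  have hQm : ∀ k, Measurable (Qf k) := fun k => (hQlip k).continuous.measurable
  have hQb : ∀ k z, |Qf k z| ≤ Cb := by
    intro k z
    have := hprob k z
    have := norm_integral_le_of_norm_le_const (μ := P k z) (f := f) (C := Cb)
      (Filter.Eventually.of_forall (by simpa [Real.norm_eq_abs] using hCb))
    simpa [hQf, Real.norm_eq_abs, measure_univ] using this
  -- semigroup property
  have hQsemi : ∀ k z, ∫ y, Qf k y ∂(P 1 z) = Qf (1 + k) z := by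
    intro k z
    have := hprob 1 z
    rw [hQf]
    simp only
    rw [hbind 1 k z, my_integral_bind (P 1 z) (hPm k) (fun y => hprob k y) hfm hCb]
  set g_ : ℕ → X → ℝ := fun n z => (∑ k ∈ Finset.range (n+1), Qf (k+1) z) / (n+1) with hg_
  have hglip : ∀ n, LipschitzWith L (g_ n) := by
    intro n
    refine LipschitzWith.of_dist_le_mul fun z w => ?_
    have e : g_ n z - g_ n w
        = (∑ k ∈ Finset.range (n+1), (Qf (k+1) z - Qf (k+1) w)) / (n+1) := by
      rw [hg_]
      simp only
      rw [div_sub_div_same, Finset.sum_sub_distrib]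
    calc dist (g_ n z) (g_ n w)
        = |∑ k ∈ Finset.range (n+1), (Qf (k+1) z - Qf (k+1) w)| / (n+1) := by
          rw [Real.dist_eq, e, abs_div, abs_of_pos (by positivity : (0:ℝ) < (n:ℝ)+1)]
      _ ≤ (∑ k ∈ Finset.range (n+1), |Qf (k+1) z - Qf (k+1) w|) / (n+1) := by
          gcongr
          exact Finset.abs_sum_le_sum_abs _ _
      _ ≤ (∑ _k ∈ Finset.range (n+1), (L : ℝ) * dist z w) / (n+1) := by
          gcongr with k hk
          rw [← Real.dist_eq]
          exact (hQlip (k+1)).dist_le_mul z w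
      _ = (L : ℝ) * dist z w := by
          rw [Finset.sum_const, Finset.card_range, nsmul_eq_mul]
          push_cast
          field_simp
  have hgb : ∀ n z, |g_ n z| ≤ Cb := by
    intro n z
    rw [hg_]
    simp only
    rw [abs_div, abs_of_pos (by positivity : (0:ℝ) < (n:ℝ)+1), div_le_iff₀ (by positivity)]
    calc |∑ k ∈ Finset.range (n+1), Qf (k+1) z| ≤ ∑ k ∈ Finset.range (n+1), |Qf (k+1) z| :=
          Finset.abs_sum_le_sum_abs _ _
      _ ≤ ∑ _k ∈ Finset.range (n+1), Cb := Finset.sum_le_sum fun k _ => hQb (k+1) z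
      _ = Cb * ((n:ℝ)+1) := by
          rw [Finset.sum_const, Finset.card_range, nsmul_eq_mul]; push_cast; ring
  have hgm : ∀ n, Measurable (g_ n) := fun n => (hglip n).continuous.measurable
  have hgsemi : ∀ n z, ∫ y, g_ n y ∂(P 1 z)
      = g_ n z + (Qf (n+2) z - Qf 1 z)/(n+1) := by
    intro n z
    have hP1 := hprob 1 z
    have hint : ∀ k : ℕ, Integrable (Qf k) (P 1 z) :=
      fun k => integrable_of_bdd (hQm k).aestronglyMeasurable (hQb k)
    have e1 : ∫ y, g_ n y ∂(P 1 z)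
        = (∑ k ∈ Finset.range (n+1), ∫ y, Qf (k+1) y ∂(P 1 z)) / (n+1) := by
      rw [hg_]
      simp only
      rw [integral_div, integral_finset_sum _ (fun k _ => hint (k+1))]
    have e2 : ∀ k : ℕ, ∫ y, Qf (k+1) y ∂(P 1 z) = Qf (k+2) z := by
      intro k
      rw [hQsemi (k+1) z]
      congr 1
      omega
    rw [e1]
    simp only [e2]
    have e3 : ∑ k ∈ Finset.range (n+1), Qf (k+2) z
        = (∑ k ∈ Finset.range (n+1), Qf (k+1) z) + Qf (n+2) z - Qf 1 z := by
      have h1 := Finset.sum_range_succ' (fun i => Qf (i+1) z) (n+1)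
      have h2 := Finset.sum_range_succ (fun i => Qf (i+1) z) (n+1)
      have : ∀ k, Qf (k+1+1) z = Qf (k+2) z := fun k => by norm_num
      simp only [this] at h1
      linarith [h1, h2]
    rw [e3, hg_]
    simp only
    ring
  have hgint : ∀ (ρ : Measure X), IsProbabilityMeasure ρ → (∀ l : ℕ, ρ.bind (P (l+1)) = ρ) →
      ∀ n, ∫ z, g_ n z ∂ρ = ∫ x, f x ∂ρ := by
    intro ρ hρ hρb n
    have hint : ∀ k : ℕ, Integrable (Qf k) ρ :=
      fun k => integrable_of_bdd (hQm k).aestronglyMeasurable (hQb k)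
    have e1 : ∫ z, g_ n z ∂ρ
        = (∑ k ∈ Finset.range (n+1), ∫ z, Qf (k+1) z ∂ρ) / (n+1) := by
      rw [hg_]
      simp only
      rw [integral_div, integral_finset_sum _ (fun k _ => hint (k+1))]
    have e2 : ∀ k : ℕ, ∫ z, Qf (k+1) z ∂ρ = ∫ x, f x ∂ρ := by
      intro k
      have := my_integral_bind ρ (hPm (k+1)) (fun y => hprob (k+1) y) hfm hCb
      rw [hρb k] at this
      exact this.symm
    rw [e1]
    simp only [e2]
    rw [Finset.sum_const, Finset.card_range, nsmul_eq_mul]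
    push_cast
    field_simp
  -- Arzelà–Ascoli extraction
  obtain ⟨gfun, φ, hφ, hgfun⟩ :
      ∃ (gfun : X → ℝ) (φ : ℕ → ℕ), StrictMono φ ∧
        ∀ z, Tendsto (fun n => g_ (φ n) z) atTop (nhds (gfun z)) := by
    obtain ⟨s, hsc, hsd⟩ := TopologicalSpace.exists_countable_dense X
    obtain ⟨e, hse⟩ := hsc.exists_eq_range hsd.nonempty
    have hde : Dense (Set.range e) := hse ▸ hsd
    have hcomp : IsCompact {x : ℕ → ℝ | ∀ i, x i ∈ Set.Icc (-Cb) Cb} :=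
      isCompact_pi_infinite fun _ => isCompact_Icc
    have hmem : ∀ n, (fun i => g_ n (e i)) ∈ {x : ℕ → ℝ | ∀ i, x i ∈ Set.Icc (-Cb) Cb} := by
      intro n i
      have := abs_le.1 (hgb n (e i))
      exact ⟨this.1, this.2⟩
    obtain ⟨a, -, φ, hφ, hconv⟩ := hcomp.tendsto_subseq hmem
    rw [tendsto_pi_nhds] at hconv
    have hcauchy : ∀ z, CauchySeq fun n => g_ (φ n) z := by
      intro z
      rw [Metric.cauchySeq_iff]
      intro ε hε
      have hδ : (0:ℝ) < ε / (3 * ((L:ℝ) + 1)) := by positivity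
      obtain ⟨y, hy, hdy⟩ := hde.exists_dist_lt z hδ
      obtain ⟨i, rfl⟩ := hy
      have hC : CauchySeq fun n => g_ (φ n) (e i) := (hconv i).cauchySeq
      obtain ⟨N, hN⟩ := Metric.cauchySeq_iff.1 hC (ε/3) (by positivity)
      refine ⟨N, fun m hm n hn => ?_⟩
      have hLd : (L:ℝ) * dist z (e i) ≤ ε/3 := by
        have hL1 : (0:ℝ) ≤ (L:ℝ) := L.coe_nonneg
        have h2 : (L:ℝ) * (ε / (3 * ((L:ℝ) + 1))) ≤ ε/3 := by
          rw [← mul_div_assoc, div_le_div_iff₀ (by positivity) (by norm_num : (0:ℝ) < 3)]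
          nlinarith [hε.le]
        exact le_trans (mul_le_mul_of_nonneg_left hdy.le hL1) h2
      calc dist (g_ (φ m) z) (g_ (φ n) z)
          ≤ dist (g_ (φ m) z) (g_ (φ m) (e i)) + dist (g_ (φ m) (e i)) (g_ (φ n) (e i))
            + dist (g_ (φ n) (e i)) (g_ (φ n) z) := dist_triangle4 _ _ _ _
        _ < ε/3 + ε/3 + ε/3 := by
            have b1 : dist (g_ (φ m) z) (g_ (φ m) (e i)) ≤ ε/3 :=
              le_trans ((hglip (φ m)).dist_le_mul z (e i)) hLd
            have b3 : dist (g_ (φ n) (e i)) (g_ (φ n) z) ≤ ε/3 := by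
              rw [dist_comm]
              exact le_trans ((hglip (φ n)).dist_le_mul z (e i)) hLd
            have b2 : dist (g_ (φ m) (e i)) (g_ (φ n) (e i)) < ε/3 := hN m hm n hn
            linarith
        _ = ε := by ring
    choose gfun hgfun using fun z => cauchySeq_tendsto_of_complete (hcauchy z)
    exact ⟨gfun, φ, hφ, hgfun⟩
  have hgfunlip : LipschitzWith L gfun := by
    refine LipschitzWith.of_dist_le_mul fun z w => ?_
    exact le_of_tendsto ((hgfun z).dist (hgfun w))
      (Filter.Eventually.of_forall fun n => (hglip (φ n)).dist_le_mul z w)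
  have hgfunb : ∀ z, |gfun z| ≤ Cb := fun z =>
    le_of_tendsto (hgfun z).abs (Filter.Eventually.of_forall fun n => hgb (φ n) z)
  have hgfunm : Measurable gfun := hgfunlip.continuous.measurable
  -- harmonicity
  have harm1 : ∀ z, ∫ y, gfun y ∂(P 1 z) = gfun z := by
    intro z
    have hP1 := hprob 1 z
    have T1 : Tendsto (fun n => ∫ y, g_ (φ n) y ∂(P 1 z)) atTop (nhds (∫ y, gfun y ∂(P 1 z))) :=
      tendsto_integral_of_dominated_convergence (fun _ => Cb)
        (fun n => (hgm (φ n)).aestronglyMeasurable) (integrable_const Cb)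
        (fun n => Filter.Eventually.of_forall fun y => by
          simpa [Real.norm_eq_abs] using hgb (φ n) y)
        (Filter.Eventually.of_forall fun y => hgfun y)
    have hφat : Tendsto (fun n => ((φ n : ℝ) + 1)) atTop atTop :=
      tendsto_atTop_add_const_right _ _ (tendsto_natCast_atTop_atTop.comp hφ.tendsto_atTop)
    have herr : Tendsto (fun n => (Qf (φ n + 2) z - Qf 1 z)/((φ n:ℝ)+1)) atTop (nhds 0) := by
      have hb : ∀ n, ‖(Qf (φ n + 2) z - Qf 1 z)/((φ n:ℝ)+1)‖ ≤ (2*Cb + 2*Cb)/((φ n : ℝ)+1) := by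
        intro n
        rw [Real.norm_eq_abs, abs_div, abs_of_pos (by positivity : (0:ℝ) < (φ n : ℝ)+1)]
        gcongr
        calc |Qf (φ n + 2) z - Qf 1 z| ≤ |Qf (φ n + 2) z| + |Qf 1 z| := abs_sub _ _
          _ ≤ Cb + Cb := add_le_add (hQb _ z) (hQb _ z)
          _ ≤ 2*Cb + 2*Cb := by linarith
      exact squeeze_zero_norm hb (Tendsto.div_atTop tendsto_const_nhds hφat)
    have T2 : Tendsto (fun n => ∫ y, g_ (φ n) y ∂(P 1 z)) atTop (nhds (gfun z)) := by
      have e : (fun n => ∫ y, g_ (φ n) y ∂(P 1 z))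
          = fun n => g_ (φ n) z + (Qf (φ n+2) z - Qf 1 z)/((φ n:ℝ)+1) :=
        funext fun n => hgsemi (φ n) z
      rw [e]
      simpa using (hgfun z).add herr
    exact tendsto_nhds_unique T1 T2
  have harml : ∀ l z, ∫ y, gfun y ∂(P (l+1) z) = gfun z := by
    intro l
    induction l with
    | zero => exact harm1
    | succ m ih =>
      intro z
      rw [hbind (m+1) 1 z]
      have hPz := hprob (m+1) z
      rw [my_integral_bind (P (m+1) z) (hPm 1) (fun y => hprob 1 y) hgfunm hgfunb]
      simp only [harm1]
      exact ih z
  -- variance rigidity: gfun is constant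
  have hconst : ∀ z w, gfun z = gfun w := by
    -- the square of gfun is bounded Lipschitz
    have hsqb : ∀ y, |(gfun y)^2| ≤ Cb^2 := by
      intro y
      rw [abs_pow]
      exact pow_le_pow_left₀ (abs_nonneg _) (hgfunb y) 2
    have hsqlip : LipschitzWith (2 * Real.toNNReal Cb * L) (fun y => (gfun y)^2) := by
      refine LipschitzWith.of_dist_le_mul fun z w => ?_
      have h1 : |gfun z + gfun w| ≤ 2*Cb := by
        calc |gfun z + gfun w| ≤ |gfun z| + |gfun w| := abs_add_le _ _
          _ ≤ Cb + Cb := add_le_add (hgfunb z) (hgfunb w)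
          _ = 2*Cb := by ring
      have h2 : |gfun z - gfun w| ≤ (L:ℝ) * dist z w := by
        rw [← Real.dist_eq]
        exact hgfunlip.dist_le_mul z w
      calc dist ((gfun z)^2) ((gfun w)^2) = |gfun z + gfun w| * |gfun z - gfun w| := by
            rw [Real.dist_eq, ← abs_mul, ← sq_sub_sq]
        _ ≤ (2*Cb) * ((L:ℝ) * dist z w) :=
            mul_le_mul h1 h2 (abs_nonneg _) (by positivity)
        _ = ((2 * Real.toNNReal Cb * L : ℝ≥0) : ℝ) * dist z w := by
            push_cast
            rw [Real.coe_toNNReal _ hCb0]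
            ring
    have hsqm : Measurable fun y => (gfun y)^2 := hgfunm.pow_const 2
    obtain ⟨L2, hL20, hLip2⟩ := hFeller (fun y => (gfun y)^2) ⟨Cb^2, hsqb⟩
      ⟨2 * Real.toNNReal Cb * L, hsqlip⟩
    have hQhm : ∀ k, Measurable fun z => ∫ y, (gfun y)^2 ∂(P k z) :=
      fun k => (hLip2 k).continuous.measurable
    have hQhb : ∀ k z, |∫ y, (gfun y)^2 ∂(P k z)| ≤ Cb^2 := by
      intro k z
      have := hprob k z
      have := norm_integral_le_of_norm_le_const (μ := P k z) (f := fun y => (gfun y)^2)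
        (C := Cb^2) (Filter.Eventually.of_forall (by simpa [Real.norm_eq_abs] using hsqb))
      simpa [Real.norm_eq_abs, measure_univ] using this
    -- variance expansion
    have hWexp : ∀ m z, ∫ y, (gfun y - gfun z)^2 ∂(P (m+1) z)
        = (∫ y, (gfun y)^2 ∂(P (m+1) z)) - (gfun z)^2 := by
      intro m z
      have hp := hprob (m+1) z
      have h2i : Integrable (fun y => (gfun y)^2) (P (m+1) z) :=
        integrable_of_bdd hsqm.aestronglyMeasurable hsqb
      have hgi : Integrable gfun (P (m+1) z) :=
        integrable_of_bdd hgfunm.aestronglyMeasurable hgfunb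
      have e : (fun y => (gfun y - gfun z)^2)
          = fun y => ((gfun y)^2 - (2*gfun z) * gfun y) + (gfun z)^2 :=
        funext fun y => by ring
      have hsubi : Integrable (fun y => (gfun y)^2 - (2*gfun z) * gfun y) (P (m+1) z) :=
        h2i.sub (hgi.const_mul _)
      rw [e, integral_add hsubi (integrable_const _),
        integral_sub h2i (hgi.const_mul (2*gfun z)), integral_const_mul _ _, harml m z,
        integral_const]
      simp [measure_univ]
      ring
    have hWm : ∀ m, Measurable fun z => (∫ y, (gfun y)^2 ∂(P (m+1) z)) - (gfun z)^2 :=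
      fun m => (hQhm (m+1)).sub hsqm
    have hWb : ∀ m z, |(∫ y, (gfun y)^2 ∂(P (m+1) z)) - (gfun z)^2| ≤ Cb^2 + Cb^2 := by
      intro m z
      calc |(∫ y, (gfun y)^2 ∂(P (m+1) z)) - (gfun z)^2|
          ≤ |∫ y, (gfun y)^2 ∂(P (m+1) z)| + |(gfun z)^2| := abs_sub _ _
        _ ≤ Cb^2 + Cb^2 := add_le_add (hQhb _ z) (hsqb z)
    have hWnn : ∀ m z, 0 ≤ (∫ y, (gfun y)^2 ∂(P (m+1) z)) - (gfun z)^2 := by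
      intro m z
      rw [← hWexp m z]
      exact integral_nonneg fun y => sq_nonneg _
    have hWint0 : ∀ m, ∫ z, ((∫ y, (gfun y)^2 ∂(P (m+1) z)) - (gfun z)^2) ∂μ = 0 := by
      intro m
      have hQi : Integrable (fun z => ∫ y, (gfun y)^2 ∂(P (m+1) z)) μ :=
        integrable_of_bdd (hQhm (m+1)).aestronglyMeasurable (fun z => hQhb (m+1) z)
      have hsqi : Integrable (fun z => (gfun z)^2) μ :=
        integrable_of_bdd hsqm.aestronglyMeasurable hsqb
      rw [integral_sub hQi hsqi]
      have := my_integral_bind μ (hPm (m+1)) (fun y => hprob (m+1) y) hsqm hsqb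
      rw [hμb m] at this
      rw [← this]
      ring
    have hWae : ∀ᵐ z ∂μ, ∀ m : ℕ,
        (∫ y, (gfun y)^2 ∂(P (m+1) z)) - (gfun z)^2 = 0 := by
      rw [ae_all_iff]
      intro m
      have := (integral_eq_zero_iff_of_nonneg (fun z => hWnn m z)
        (integrable_of_bdd (hWm m).aestronglyMeasurable (hWb m))).1 (hWint0 m)
      filter_upwards [this] with z hz using hz
    obtain ⟨z₀, hz₀⟩ := hWae.exists
    suffices hS : ∀ w, gfun w = gfun z₀ by
      intro z w
      rw [hS z, hS w]
    intro w
    by_contra hne2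
    have hc0 : 0 < |gfun w - gfun z₀| := abs_pos.2 (sub_ne_zero.2 hne2)
    set c := |gfun w - gfun z₀| with hc
    set r := c / (2*((L:ℝ)+1)) with hr
    have hr0 : 0 < r := by positivity
    obtain ⟨l, hl1, hlp⟩ := hirr z₀ w r hr0
    obtain ⟨m, rfl⟩ : ∃ m, l = m + 1 := ⟨l - 1, by omega⟩
    have hinteg : Integrable (fun y => (gfun y - gfun z₀)^2) (P (m+1) z₀) := by
      have := hprob (m+1) z₀
      refine integrable_of_bdd ((hgfunm.sub measurable_const).pow_const 2).aestronglyMeasurable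
        (C := (Cb + Cb)^2) fun y => ?_
      rw [abs_pow]
      refine pow_le_pow_left₀ (abs_nonneg _) ?_ 2
      calc |gfun y - gfun z₀| ≤ |gfun y| + |gfun z₀| := abs_sub _ _
        _ ≤ Cb + Cb := add_le_add (hgfunb y) (hgfunb z₀)
    have h0 : ∫ y, (gfun y - gfun z₀)^2 ∂(P (m+1) z₀) = 0 := by
      rw [hWexp m z₀]
      exact hz₀ m
    have hae := (integral_eq_zero_iff_of_nonneg (fun y => sq_nonneg _) hinteg).1 h0
    have hnull : P (m+1) z₀ {y | (gfun y - gfun z₀)^2 ≠ 0} = 0 := by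
      rw [Filter.EventuallyEq, ae_iff] at hae
      simpa using hae
    have hsub : ball w r ⊆ {y | (gfun y - gfun z₀)^2 ≠ 0} := by
      intro y hy
      have h1 : |gfun y - gfun w| ≤ (L:ℝ) * r := by
        have h2 := hgfunlip.dist_le_mul y w
        rw [Real.dist_eq] at h2
        exact le_trans h2 (mul_le_mul_of_nonneg_left (le_of_lt (mem_ball.1 hy)) L.coe_nonneg)
      have hL1 : (0:ℝ) ≤ (L:ℝ) := L.coe_nonneg
      have h2 : (L:ℝ)*r < c := by
        rw [hr, ← mul_div_assoc, div_lt_iff₀ (by positivity)]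
        nlinarith
      have h3 : gfun y - gfun z₀ ≠ 0 := by
        intro h
        have e1 : gfun y = gfun z₀ := by linarith [sub_eq_zero.1 h]
        have e2 : |gfun w - gfun z₀| ≤ |gfun y - gfun w| := by
          rw [← e1]
          rw [abs_sub_comm]
        have : c ≤ (L:ℝ)*r := le_trans e2 h1
        linarith
      simpa [pow_eq_zero_iff] using h3
    exact absurd (measure_mono_null hsub hnull) (ne_of_gt hlp)
  -- conclusion
  have hfinal : ∀ (ρ : Measure X), IsProbabilityMeasure ρ → (∀ l : ℕ, ρ.bind (P (l+1)) = ρ) →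
      ∫ x, f x ∂ρ = gfun (Classical.arbitrary X) := by
    intro ρ hρ hρb
    have T1 : Tendsto (fun n => ∫ z, g_ (φ n) z ∂ρ) atTop (nhds (∫ z, gfun z ∂ρ)) := by
      refine tendsto_integral_of_dominated_convergence (fun _ => Cb)
        (fun n => (hgm (φ n)).aestronglyMeasurable) (integrable_const Cb)
        (fun n => Filter.Eventually.of_forall fun z => by
          simpa [Real.norm_eq_abs] using hgb (φ n) z)
        (Filter.Eventually.of_forall fun z => hgfun z)
    have T2 : (fun n => ∫ z, g_ (φ n) z ∂ρ) = fun _ => ∫ x, f x ∂ρ :=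
      funext fun n => hgint ρ hρ hρb (φ n)
    rw [T2] at T1
    have h1 : ∫ x, f x ∂ρ = ∫ z, gfun z ∂ρ := tendsto_nhds_unique tendsto_const_nhds T1
    rw [h1]
    have : gfun = fun _ => gfun (Classical.arbitrary X) :=
      funext fun z => hconst z (Classical.arbitrary X) ▸ (hconst z (Classical.arbitrary X))
    rw [this, integral_const]
    simp [measure_univ]
  rw [hfinal μ ‹_› hμb, hfinal ν ‹_› hνb]

/-- Uniqueness of stationary measures for a Feller Markov transition function on a Polish
space, under the uniform Feller property (Cesàro equicontinuity on bounded Lipschitz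
functions) and topological irreducibility. `P k z` is the transition probability at time
`k` starting from `z`; it satisfies the Chapman–Kolmogorov relation. -/
theorem stmt_0 {X : Type*} [MetricSpace X] [PolishSpace X]
    [MeasurableSpace X] [BorelSpace X]
    (P : ℕ → X → Measure X)
    (hprob : ∀ k z, IsProbabilityMeasure (P k z))
    (hmeas : ∀ k {Γ : Set X}, MeasurableSet Γ → Measurable fun z => P k z Γ)
    (hCK : ∀ k l z {Γ : Set X}, MeasurableSet Γ →
      P (k + l) z Γ = ∫⁻ y, P l y Γ ∂(P k z))
    -- (i) uniform Feller property: for every bounded Lipschitz `f` there is `L_f > 0`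
    -- such that every `𝔓_k f = z ↦ ∫ f d(P k z)` is `L_f`-Lipschitz
    (hFeller : ∀ f : X → ℝ, (∃ Cb : ℝ, ∀ z, |f z| ≤ Cb) → (∃ K : ℝ≥0, LipschitzWith K f) →
      ∃ L : ℝ≥0, 0 < L ∧ ∀ k : ℕ, LipschitzWith L fun z => ∫ y, f y ∂(P k z))
    -- (ii) irreducibility: every open ball is charged at some time `l ≥ 1`
    (hirr : ∀ z : X, ∀ x : X, ∀ r : ℝ, 0 < r → ∃ l : ℕ, 1 ≤ l ∧ 0 < P l z (ball x r))
    -- stationary measures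
    (μ ν : Measure X) [IsProbabilityMeasure μ] [IsProbabilityMeasure ν]
    (hμ : ∀ {Γ : Set X}, MeasurableSet Γ → μ Γ = ∫⁻ z, P 1 z Γ ∂μ)
    (hν : ∀ {Γ : Set X}, MeasurableSet Γ → ν Γ = ∫⁻ z, P 1 z Γ ∂ν) :
    μ = ν := by
  have hPm : ∀ k, Measurable (P k) :=
    fun k => Measure.measurable_of_measurable_coe _ (fun s hs => hmeas k hs)
  have hbind : ∀ k l z, P (k + l) z = (P k z).bind (P l) := fun k l z =>
    Measure.ext fun s hs => by rw [Measure.bind_apply hs (hPm l).aemeasurable]; exact hCK k l z hs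
  have hstat : ∀ (ρ : Measure X), IsProbabilityMeasure ρ →
      (∀ {Γ : Set X}, MeasurableSet Γ → ρ Γ = ∫⁻ z, P 1 z Γ ∂ρ) →
      ∀ l : ℕ, ρ.bind (P (l+1)) = ρ := by
    intro ρ hρ hρ1 l
    have h1 : ρ.bind (P 1) = ρ := Measure.ext fun s hs => by
      rw [Measure.bind_apply hs (hPm 1).aemeasurable]; exact (hρ1 hs).symm
    induction l with
    | zero => exact h1
    | succ m ih =>
      have e : P (m+1+1) = fun z => (P 1 z).bind (P (m+1)) := funext fun z => by
        have h := hbind 1 (m+1) z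
        rwa [show 1+(m+1) = m+1+1 from by omega] at h
      rw [e, ← Measure.bind_bind (hPm 1).aemeasurable (hPm (m+1)).aemeasurable, h1, ih]
  have key : ∀ (f : X → ℝ) (Cb : ℝ), (∀ z, |f z| ≤ Cb) → ∀ (K : ℝ≥0), LipschitzWith K f →
      ∫ x, f x ∂μ = ∫ x, f x ∂ν := fun f Cb hCb K hK =>
    key_lemma P hprob hPm hbind hFeller hirr μ ν (hstat μ ‹_› hμ) (hstat ν ‹_› hν) f Cb hCb K hK
  have hclosed : ∀ F : Set X, IsClosed F → μ F = ν F := by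
    intro F hF
    rcases Set.eq_empty_or_nonempty F with rfl | hFne
    · simp
    set fF : ℕ → X → ℝ := fun n x => max (1 - ((n:ℝ)+1) * infDist x F) 0 with hfF
    have hb : ∀ n x, |fF n x| ≤ 1 := by
      intro n x
      rw [abs_le]
      constructor
      · have := le_max_right (1 - ((n:ℝ)+1) * infDist x F) 0; linarith
      · apply max_le _ zero_le_one
        nlinarith [infDist_nonneg (s := F) (x := x), Nat.cast_nonneg (α := ℝ) n]
    have hlip : ∀ n : ℕ, LipschitzWith ((n:ℝ≥0)+1) (fF n) := by
      intro n
      refine LipschitzWith.of_dist_le_mul fun x y => ?_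
      rw [Real.dist_eq, hfF]
      simp only
      have h1 : |max (1-((n:ℝ)+1)*infDist x F) 0 - max (1-((n:ℝ)+1)*infDist y F) 0|
          ≤ |(1-((n:ℝ)+1)*infDist x F) - (1-((n:ℝ)+1)*infDist y F)| :=
        abs_max_sub_max_le_abs _ _ _
      have h2 : |(1-((n:ℝ)+1)*infDist x F) - (1-((n:ℝ)+1)*infDist y F)|
          = ((n:ℝ)+1) * |infDist y F - infDist x F| := by
        have e : (1-((n:ℝ)+1)*infDist x F) - (1-((n:ℝ)+1)*infDist y F)
            = ((n:ℝ)+1)*(infDist y F - infDist x F) := by ring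
        rw [e, abs_mul, abs_of_pos (by positivity : (0:ℝ) < (n:ℝ)+1)]
      have h3 : |infDist y F - infDist x F| ≤ dist x y := by
        have h4 := (lipschitz_infDist_pt F).dist_le_mul y x
        rw [Real.dist_eq] at h4
        simpa [dist_comm] using h4
      calc |max (1-((n:ℝ)+1)*infDist x F) 0 - max (1-((n:ℝ)+1)*infDist y F) 0|
          ≤ ((n:ℝ)+1) * |infDist y F - infDist x F| := by rw [← h2]; exact h1
        _ ≤ ((n:ℝ)+1) * dist x y := mul_le_mul_of_nonneg_left h3 (by positivity)
        _ = (((n:ℝ≥0)+1 : ℝ≥0) : ℝ) * dist x y := by push_cast; ring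
    have hptw : ∀ x, Tendsto (fun n => fF n x) atTop (nhds (F.indicator (1 : X → ℝ) x)) := by
      intro x
      by_cases hx : x ∈ F
      · have e : ∀ n, fF n x = 1 := by
          intro n
          rw [hfF]
          simp [infDist_zero_of_mem hx]
        rw [Set.indicator_of_mem hx]
        simp only [e, Pi.one_apply]
        exact tendsto_const_nhds
      · have hd : 0 < infDist x F := by
          rcases lt_or_eq_of_le (infDist_nonneg (s := F) (x := x)) with h | h
          · exact h
          · exact absurd ((hF.mem_iff_infDist_zero hFne).2 h.symm) hx
        rw [Set.indicator_of_notMem hx]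
        obtain ⟨N, hN⟩ := exists_nat_ge (1 / infDist x F)
        have e : ∀ n ≥ N, fF n x = 0 := by
          intro n hn
          rw [hfF]
          simp only
          apply max_eq_right
          have h5 : (1:ℝ) / infDist x F ≤ (n:ℝ) := le_trans hN (by exact_mod_cast hn)
          have h6 : (1:ℝ) ≤ (n:ℝ) * infDist x F := by
            rw [div_le_iff₀ hd] at h5
            linarith
          nlinarith
        refine Tendsto.congr' ?_ tendsto_const_nhds
        filter_upwards [eventually_ge_atTop N] with n hn using (e n hn).symm
    have hconv : ∀ (ρ : Measure X), IsProbabilityMeasure ρ →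
        Tendsto (fun n => ∫ x, fF n x ∂ρ) atTop (nhds ((ρ F).toReal)) := by
      intro ρ hρ
      have h := tendsto_integral_of_dominated_convergence (μ := ρ) (F := fun n x => fF n x)
        (f := F.indicator 1) (fun _ => 1)
        (fun n => (hlip n).continuous.measurable.aestronglyMeasurable)
        (integrable_const 1)
        (fun n => Filter.Eventually.of_forall fun x => by
          simpa [Real.norm_eq_abs] using hb n x)
        (Filter.Eventually.of_forall hptw)
      rwa [integral_indicator_one hF.measurableSet] at h
    have heq : (fun n => ∫ x, fF n x ∂μ) = fun n => ∫ x, fF n x ∂ν :=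
      funext fun (n : ℕ) => key (fF n) 1 (hb n) ((n:ℝ≥0)+1) (hlip n)
    have h7 : (μ F).toReal = (ν F).toReal := by
      refine tendsto_nhds_unique ?_ (hconv ν ‹_›)
      rw [← heq]
      exact hconv μ ‹_›
    exact (ENNReal.toReal_eq_toReal_iff' (measure_ne_top μ F) (measure_ne_top ν F)).1 h7
  refine ext_of_generate_finite {s : Set X | IsClosed s} ?_ isPiSystem_isClosed
    (fun F hF => hclosed F hF) (hclosed _ isClosed_univ)
  rw [BorelSpace.measurable_eq (α := X), borel_eq_generateFrom_isClosed]
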